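/- arXiv:2407.14120 — 2 statements merged into one kernel-verified Lean document; each statement's English description precedes it below -/
import Mathlib

section
/- In the Soccer Ball Graph, the set of ten hexagonal vertices {H(2,j) | 1 ≤ j ≤ 5} ∪ {H(5,j) | 1 ≤ j ≤ 5} is an Identifying Code Set; hence the minimum cardinality of an ICS for the SBG is at most 10. -/
/-- Vertices of the Soccer Ball Graph: 12 pentagonal vertices
(`P1`, `P3 j`, `P4 j`, `P6`) and 20 hexagonal vertices
(`H2 j`, `H3 j`, `H4 j`, `H5 j`), indices `j : Fin 5` taken cyclically. -/
inductive SBGVertex : Type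
  | P1 : SBGVertex
  | P3 : Fin 5 → SBGVertex
  | P4 : Fin 5 → SBGVertex
  | P6 : SBGVertex
  | H2 : Fin 5 → SBGVertex
  | H3 : Fin 5 → SBGVertex
  | H4 : Fin 5 → SBGVertex
  | H5 : Fin 5 → SBGVertex
  deriving DecidableEq, Fintype

open SBGVertex

/-- One direction of each of the 17 edge families E1–E17 (indices mod 5). -/
def sbgRel : SBGVertex → SBGVertex → Bool
  | P1, H2 _ => true                                -- E1
  | P6, H5 _ => true                                -- E2
  | H2 j, H2 k => k == j + 1                        -- E3 (i = 2)
  | H5 j, H5 k => k == j + 1                        -- E3 (i = 5)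
  | H3 j, P3 k => k == j                            -- E4
  | P3 j, H3 k => k == j + 1                        -- E5
  | H4 j, P4 k => k == j + 1                        -- E6
  | P4 j, H4 k => k == j                            -- E7
  | H2 j, H3 k => k == j                            -- E8
  | H2 j, P3 k => k == j - 1 || k == j              -- E9, E10
  | H3 j, P4 k => k == j                            -- E11
  | H3 j, H4 k => k == j - 1 || k == j              -- E12, E13
  | P3 j, H4 k => k == j                            -- E14
  | H4 j, H5 k => k == j                            -- E15
  | P4 j, H5 k => k == j - 1 || k == j              -- E16, E17
  | _, _ => false

/-- The Soccer Ball Graph. -/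
def SBG : SimpleGraph SBGVertex where
  Adj v w := v ≠ w ∧ (sbgRel v w || sbgRel w v)
  symm := by
    constructor
    intro v w h
    exact ⟨h.1.symm, by have := h.2; rwa [Bool.or_comm]⟩
  loopless := by constructor; intro v h; exact h.1 rfl

instance : DecidableRel SBG.Adj := fun v w =>
  inferInstanceAs (Decidable (v ≠ w ∧ (sbgRel v w || sbgRel w v) = true))

/-- Closed neighborhood `N⁺(v)` of a vertex of the SBG. -/
def closedNbhd (v : SBGVertex) : Finset SBGVertex :=
  Finset.univ.filter fun u => u = v ∨ SBG.Adj v u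

/-- `V'` is an Identifying Code Set of the SBG. -/
def IsICS (V' : Finset SBGVertex) : Prop :=
  ∀ v w : SBGVertex, v ≠ w → closedNbhd v ∩ V' ≠ closedNbhd w ∩ V'

/-- The ten hexagonal vertices of layers 2 and 5 form an Identifying Code Set
of the SBG; hence the minimum cardinality of an ICS of the SBG is at most 10. -/
theorem sbg_ics_of_card_ten :
    IsICS ((Finset.univ.image H2) ∪ (Finset.univ.image H5)) ∧
    ∃ V' : Finset SBGVertex, IsICS V' ∧ V'.card ≤ 10 := by
  have h : IsICS ((Finset.univ.image H2) ∪ (Finset.univ.image H5)) := by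
    unfold IsICS; decide
  exact ⟨h, _, h, by decide⟩
end

section
/- In the Soccer Ball Graph, no set of three vertices from the top half (layers L1–L3) can distinguish all six vertices of layers L1 ∪ L2; i.e., for every V' ⊆ L1 ∪ L2 ∪ L3 with |V'| = 3, there exist distinct vertices u, v ∈ L1 ∪ L2 with N⁺(u) ∩ V' = N⁺(v) ∩ V'. -/
open SBGVertex

/-- Membership in the top half (layers L1–L3) of the SBG. -/
def inTopHalf : SBGVertex → Bool
  | P1 => true | H2 _ => true | H3 _ => true | P3 _ => true
  | _ => false

/-- The top half L1 ∪ L2 ∪ L3 of the SBG. -/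
def topHalf : Finset SBGVertex := Finset.univ.filter fun v => inTopHalf v

/-- The bottom half L4 ∪ L5 ∪ L6 of the SBG. -/
def bottomHalf : Finset SBGVertex := Finset.univ.filter fun v => ¬ inTopHalf v

/-- Membership in layers L1 ∪ L2. -/
def inL12 : SBGVertex → Bool
  | P1 => true | H2 _ => true
  | _ => false

/-- Layers L1 ∪ L2 of the SBG. -/
def L12 : Finset SBGVertex := Finset.univ.filter fun v => inL12 v

/-- Boolean closed-neighborhood indicator. -/
def nb (u x : SBGVertex) : Bool := (x == u) || sbgRel u x || sbgRel x u

lemma mem_closedNbhd_iff (u x : SBGVertex) : x ∈ closedNbhd u ↔ nb u x = true := by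
  simp only [closedNbhd, Finset.mem_filter, Finset.mem_univ, true_and, nb, SBG,
    Bool.or_eq_true, beq_iff_eq]
  by_cases hxu : x = u
  · subst hxu; tauto
  · have hux : u ≠ x := Ne.symm hxu
    tauto

def topList : List SBGVertex :=
  [P1, H2 0, H2 1, H2 2, H2 3, H2 4, H3 0, H3 1, H3 2, H3 3, H3 4,
   P3 0, P3 1, P3 2, P3 3, P3 4]

def L12List : List SBGVertex := [P1, H2 0, H2 1, H2 2, H2 3, H2 4]

lemma mem_topList_of_topHalf {v : SBGVertex} (h : v ∈ topHalf) : v ∈ topList := by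
  have h' : inTopHalf v = true := by
    simpa [topHalf] using h
  cases v with
  | P1 => simp [topList]
  | H2 j => fin_cases j <;> simp [topList]
  | H3 j => fin_cases j <;> simp [topList]
  | P3 j => fin_cases j <;> simp [topList]
  | P4 j => simp [inTopHalf] at h'
  | H4 j => simp [inTopHalf] at h'
  | H5 j => simp [inTopHalf] at h'
  | P6 => simp [inTopHalf] at h'

lemma mem_L12_of_mem_L12List {v : SBGVertex} (h : v ∈ L12List) : v ∈ L12 := by
  fin_cases h <;> decide

set_option maxRecDepth 20000 in
lemma key : ∀ a ∈ topList, ∀ b ∈ topList, ∀ c ∈ topList,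
    ∃ u ∈ L12List, ∃ v ∈ L12List, u ≠ v ∧
      nb u a = nb v a ∧ nb u b = nb v b ∧ nb u c = nb v c := by decide

/-- No set of three vertices from the top half (layers L1–L3) of the SBG can
distinguish all six vertices of L1 ∪ L2: for every such set of size 3, two
distinct vertices of L1 ∪ L2 get the same signature. -/
theorem sbg_three_insufficient_for_top (V' : Finset SBGVertex)
    (hsub : V' ⊆ topHalf) (hcard : V'.card = 3) :
    ∃ u ∈ L12, ∃ v ∈ L12, u ≠ v ∧ closedNbhd u ∩ V' = closedNbhd v ∩ V' := by
  obtain ⟨a, b, c, hab, hac, hbc, rfl⟩ := Finset.card_eq_three.mp hcard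
  have ha := mem_topList_of_topHalf (hsub (show a ∈ ({a, b, c} : Finset _) by simp))
  have hb := mem_topList_of_topHalf (hsub (show b ∈ ({a, b, c} : Finset _) by simp))
  have hc := mem_topList_of_topHalf (hsub (show c ∈ ({a, b, c} : Finset _) by simp))
  obtain ⟨u, hu, v, hv, huv, h1, h2, h3⟩ := key a ha b hb c hc
  refine ⟨u, mem_L12_of_mem_L12List hu, v, mem_L12_of_mem_L12List hv, huv, ?_⟩
  ext x
  simp only [Finset.mem_inter, Finset.mem_insert, Finset.mem_singleton,
    mem_closedNbhd_iff]
  constructor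
  · rintro ⟨hn, rfl | rfl | rfl⟩
    · exact ⟨h1 ▸ hn, Or.inl rfl⟩
    · exact ⟨h2 ▸ hn, Or.inr (Or.inl rfl)⟩
    · exact ⟨h3 ▸ hn, Or.inr (Or.inr rfl)⟩
  · rintro ⟨hn, rfl | rfl | rfl⟩
    · exact ⟨h1.symm ▸ hn, Or.inl rfl⟩
    · exact ⟨h2.symm ▸ hn, Or.inr (Or.inl rfl)⟩
    · exact ⟨h3.symm ▸ hn, Or.inr (Or.inr rfl)⟩
end
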